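/- Let G be a group, 𝔤 = (g_1,…,g_n) a finite string of elements of G, ℰ = {E_1,…,E_m} a finite partition of G, and let a subsystem of Eq(𝔤,ℰ) consisting of n equations be encoded by n×ℓ (0,1)-matrices V and W (where ℓ = |Con(𝔤,ℰ)|). Suppose ∑_{i=1}^n (W_i − V_i) = (1,1,…,1) and there exists an n×n permutation matrix P, associated to a permutation π of {1,…,n}, such that the first n−1 rows of the matrix PW − P⁺V have only nonnegative entries. Then the Tarski number of G satisfies τ(G) ≤ 1 + |A_{π(1)}| + ℓ, where |A_{π(1)}| denotes the number of entries equal to 1 in row π(1) of V. -/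

import Mathlib

namespace PaperStmt

/-- A (0,1)-matrix: every entry is 0 or 1. -/
def ZeroOneMat {α β : Type*} (M : Matrix α β ℝ) : Prop := ∀ i j, M i j = 0 ∨ M i j = 1

/-- The lower-triangular matrix `T` with all entries on and below the diagonal equal to 1. -/
def Tmat (n : ℕ) : Matrix (Fin n) (Fin n) ℝ := fun i j => if j ≤ i then 1 else 0

/-- The permutation matrix associated to a permutation `σ` (row `i` is `e_{σ i}`). -/
def permMat {n : ℕ} (σ : Equiv.Perm (Fin n)) : Matrix (Fin n) (Fin n) ℝ :=
  fun i j => if σ i = j then 1 else 0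

/-- Cyclic successor on `Fin n`. -/
def cycSucc {n : ℕ} (i : Fin n) : Fin n := ⟨(i.val + 1) % n, Nat.mod_lt _ i.pos⟩

/-- `M⁺`: the matrix `M` with its rows cyclically shifted up by one. -/
def shiftRows {n : ℕ} {ι : Type*} (M : Matrix (Fin n) ι ℝ) : Matrix (Fin n) ι ℝ :=
  fun i j => M (cycSucc i) j

/-- The system `(B - A) X = 0` is *normal* if there is a permutation matrix `P` such that
every entry of `T P (B - A) - P⁺ A` is an integer `≥ -1`. -/
def IsNormal {n : ℕ} {ι : Type*} (A B : Matrix (Fin n) ι ℝ) : Prop :=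
  ∃ σ : Equiv.Perm (Fin n), ∀ (i : Fin n) (j : ι),
    ∃ z : ℤ,
      (Tmat n * (permMat σ * (B - A)) - shiftRows (permMat σ) * A) i j = (z : ℝ) ∧ -1 ≤ z

end PaperStmt

open Pointwise

namespace PaperStmt

/-- A group admits a paradoxical decomposition: there are pairwise disjoint subsets
`A 1, …, A p, B 1, …, B q` and group elements `s i`, `t j` such that the translates
`s i • A i` partition `G` and the translates `t j • B j` partition `G`. -/
def IsParadoxical (G : Type*) [Group G] : Prop :=
  ∃ (p q : ℕ), 0 < p ∧ 0 < q ∧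
    ∃ (A : Fin p → Set G) (B : Fin q → Set G) (s : Fin p → G) (t : Fin q → G),
      (∀ i i', i ≠ i' → Disjoint (A i) (A i')) ∧
      (∀ j j', j ≠ j' → Disjoint (B j) (B j')) ∧
      (∀ i j, Disjoint (A i) (B j)) ∧
      (⋃ i, s i • A i) = Set.univ ∧
      (∀ i i', i ≠ i' → Disjoint (s i • A i) (s i' • A i')) ∧
      (⋃ j, t j • B j) = Set.univ ∧
      (∀ j j', j ≠ j' → Disjoint (t j • B j) (t j' • B j'))

/-- A finitely additive, left-invariant probability measure defined on all subsets of `G`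
(the defining property of amenability for a discrete group). -/
def HasLeftInvariantMean (G : Type*) [Group G] : Prop :=
  ∃ μ : Set G → ℝ,
    (∀ A : Set G, 0 ≤ μ A ∧ μ A ≤ 1) ∧
    μ Set.univ = 1 ∧
    (∀ A B : Set G, Disjoint A B → μ (A ∪ B) = μ A + μ B) ∧
    (∀ (g : G) (A : Set G), μ (g • A) = μ A)

/-- A *complete* paradoxical decomposition with `p + q` pieces: the pieces
`A 1, …, A p, B 1, …, B q` form a partition of `G`, and the translates
`s i • A i` and `t j • B j` each form a partition of `G`. -/
def IsCompleteParadox (G : Type*) [Group G] (p q : ℕ) : Prop :=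
  ∃ (A : Fin p → Set G) (B : Fin q → Set G) (s : Fin p → G) (t : Fin q → G),
    (∀ i i', i ≠ i' → Disjoint (A i) (A i')) ∧
    (∀ j j', j ≠ j' → Disjoint (B j) (B j')) ∧
    (∀ i j, Disjoint (A i) (B j)) ∧
    ((⋃ i, A i) ∪ (⋃ j, B j)) = Set.univ ∧
    (⋃ i, s i • A i) = Set.univ ∧
    (∀ i i', i ≠ i' → Disjoint (s i • A i) (s i' • A i')) ∧
    (⋃ j, t j • B j) = Set.univ ∧
    (∀ j j', j ≠ j' → Disjoint (t j • B j) (t j' • B j'))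

/-- The Tarski number of a group: the least total number of pieces `p + q` over all
complete paradoxical decompositions of `G`, and `∞` if there is none. -/
noncomputable def tarskiNumber (G : Type*) [Group G] : ℕ∞ :=
  sInf {N : ℕ∞ | ∃ p q : ℕ, N = ((p + q : ℕ) : ℕ∞) ∧ IsCompleteParadox G p q}

end PaperStmt

open Pointwise

namespace PaperStmt

/-- `E : Fin m → Set G` is a partition of `G`: pairwise disjoint with union all of `G`. -/
def IsPartition {G : Type*} {m : ℕ} (E : Fin m → Set G) : Prop :=
  (∀ i j, i ≠ j → Disjoint (E i) (E j)) ∧ (⋃ i, E i) = Set.univ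

/-- `C = (c_0, …, c_n)` is a configuration for the pair `(g, E)`: there is `x ∈ E (c 0)`
with `g i * x ∈ E (c i)` for `1 ≤ i ≤ n`. -/
def IsConfig {G : Type*} [Group G] {n m : ℕ} (g : Fin n → G) (E : Fin m → Set G)
    (C : Fin (n + 1) → Fin m) : Prop :=
  ∃ x : G, x ∈ E (C 0) ∧ ∀ i : Fin n, g i * x ∈ E (C i.succ)

/-- `x_0(C) = E_{c_0} ∩ ⋂_{j=1}^n g_j⁻¹ E_{c_j}`. -/
def xzero {G : Type*} [Group G] {n m : ℕ} (g : Fin n → G) (E : Fin m → Set G)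
    (C : Fin (n + 1) → Fin m) : Set G :=
  E (C 0) ∩ ⋂ i : Fin n, (g i)⁻¹ • E (C i.succ)

/-- The string `(g_0, g_1, …, g_n)` with `g_0 = e`. -/
def ghat {G : Type*} [Group G] {n : ℕ} (g : Fin n → G) : Fin (n + 1) → G := Fin.cons 1 g

/-- `x_j(C) = g_j • x_0(C)` for `0 ≤ j ≤ n` (with `g_0 = e`). -/
def xj {G : Type*} [Group G] {n m : ℕ} (g : Fin n → G) (E : Fin m → Set G)
    (C : Fin (n + 1) → Fin m) (j : Fin (n + 1)) : Set G :=
  ghat g j • xzero g E C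

/-- The real-valued indicator of a proposition. -/
noncomputable def ind (P : Prop) : ℝ :=
  letI := Classical.propDecidable P; if P then 1 else 0

/-- `f` is a solution of the system of configuration equations `Eq(g, E)`:
for all `1 ≤ i ≤ m` and `0 ≤ j, k ≤ n`,
`∑_{C : x_j(C) ⊆ E_i} f C = ∑_{C : x_k(C) ⊆ E_i} f C`. -/
def IsEqSolution {G : Type*} [Group G] {n m : ℕ} (g : Fin n → G) (E : Fin m → Set G)
    (f : {C : Fin (n + 1) → Fin m // IsConfig g E C} → ℝ) : Prop :=
  ∀ (i : Fin m) (j k : Fin (n + 1)),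
    ∑ᶠ C ∈ {C : {C : Fin (n + 1) → Fin m // IsConfig g E C} | xj g E C.1 j ⊆ E i}, f C =
    ∑ᶠ C ∈ {C : {C : Fin (n + 1) → Fin m // IsConfig g E C} | xj g E C.1 k ⊆ E i}, f C

end PaperStmt

namespace PaperStmt

/-- If a subsystem of `Eq(g, E)` of `n` equations, encoded by `n × ℓ` (0,1)-matrices `V`, `W`,
satisfies `∑_i (W_i - V_i) = (1, …, 1)` and there is a permutation matrix `P` (associated to a
permutation `σ`) such that the first `n - 1` rows of `P W - P⁺ V` are nonnegative, then
`τ(G) ≤ 1 + |A_{σ(1)}| + ℓ`, where `|A_{σ(1)}|` is the number of `1`s in row `σ(1)` of `V`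
and `ℓ = |Con(g, E)|`. -/
private def uext {G : Type*} [Group G] {n : ℕ} (u : Fin n → G) : ℕ → G :=
  fun j => if h : j < n then u ⟨j, h⟩ else 1

private def vprod {G : Type*} [Group G] {n : ℕ} (u : Fin n → G) : ℕ → G
  | 0 => uext u 0
  | (j+1) => vprod u j * uext u (j+1)

private def cpred {G : Type*} [Group G] {n : ℕ} {K : Type*} (cfg : G → K)
    (a : Fin n → K → Prop) (u : Fin n → G) (j : ℕ) (z : G) : Prop :=
  ∃ h : j < n, a ⟨j, h⟩ (cfg ((vprod u j)⁻¹ * z))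

open Classical in
private noncomputable def UKset {n : ℕ} {K : Type*} (a b : Fin n → K → Prop) (k : K) :
    Finset (Fin n) :=
  Finset.univ.filter (fun i => a i k ∧ ∀ h : i.val + 1 < n, ¬ b ⟨i.val + 1, h⟩ k)

open Classical in
private theorem card_UKset {n : ℕ} {K : Type*} (hn : 0 < n) (a b : Fin n → K → Prop)
    (hmono : ∀ (i : ℕ) (h : i + 1 < n) (k : K), b ⟨i+1, h⟩ k → a ⟨i, Nat.lt_of_succ_lt h⟩ k)
    (k : K)
    (hcount : Nat.card {i : Fin n // a i k} = Nat.card {i : Fin n // b i k} + 1) :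
    (b ⟨0, hn⟩ k → (UKset a b k).card = 2) ∧ (¬ b ⟨0, hn⟩ k → (UKset a b k).card = 1) := by
  classical
  have hcount' : (Finset.univ.filter (fun i => a i k)).card
      = (Finset.univ.filter (fun i => b i k)).card + 1 := by
    have c1 : Nat.card {i : Fin n // a i k} = (Finset.univ.filter (fun i => a i k)).card := by
      rw [Nat.card_eq_fintype_card, Fintype.card_subtype]
    have c2 : Nat.card {i : Fin n // b i k} = (Finset.univ.filter (fun i => b i k)).card := by
      rw [Nat.card_eq_fintype_card, Fintype.card_subtype]
    rw [← c1, ← c2]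
    exact hcount
  set bs : Fin n → Prop := fun i => ∃ h : i.val + 1 < n, b ⟨i.val + 1, h⟩ k with hbs
  set f : ℕ → ℕ := fun t => if h : t < n then (if b ⟨t, h⟩ k then 1 else 0) else 0 with hf
  have h1 : (UKset a b k).card = ∑ i : Fin n, if a i k ∧ ¬ bs i then 1 else 0 := by
    rw [UKset, Finset.card_filter]
    refine Finset.sum_congr rfl fun i _ => ?_
    have : (a i k ∧ ∀ h : i.val + 1 < n, ¬ b ⟨i.val + 1, h⟩ k) ↔ (a i k ∧ ¬ bs i) := by
      simp only [hbs, not_exists]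
    simp only [this]
  have h2 : ∀ i : Fin n, (if a i k ∧ ¬ bs i then 1 else 0) + (if bs i then 1 else 0)
      = (if a i k then (1:ℕ) else 0) := by
    intro i
    by_cases hb : bs i
    · have ha : a i k := by
        obtain ⟨h, hbb⟩ := hb
        exact hmono i.val h k hbb
      simp [hb, ha]
    · by_cases ha : a i k <;> simp [hb, ha]
  have h3 : ∀ i : Fin n, (if bs i then (1:ℕ) else 0) = f (i.val + 1) := by
    intro i
    simp only [hf]
    by_cases h : i.val + 1 < n
    · rw [dif_pos h]
      by_cases hb : b ⟨i.val + 1, h⟩ k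
      · rw [if_pos hb, if_pos ⟨h, hb⟩]
      · rw [if_neg hb, if_neg (by rintro ⟨h', hb'⟩; exact hb hb')]
    · rw [dif_neg h, if_neg (by rintro ⟨h', _⟩; exact h h')]
  have h4 : ∀ i : Fin n, (if b i k then (1:ℕ) else 0) = f i.val := by
    intro i
    simp only [hf]
    rw [dif_pos i.isLt]
  have hsumbs : ∑ i : Fin n, (if bs i then (1:ℕ) else 0)
      = (∑ i : Fin n, if b i k then (1:ℕ) else 0) - f 0 := by
    have e1 : ∑ i : Fin n, (if bs i then (1:ℕ) else 0) = ∑ j ∈ Finset.range n, f (j+1) := by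
      rw [Finset.sum_congr rfl fun i _ => h3 i]
      exact Fin.sum_univ_eq_sum_range (fun t => f (t+1)) n
    have e2 : ∑ i : Fin n, (if b i k then (1:ℕ) else 0) = ∑ j ∈ Finset.range n, f j := by
      rw [Finset.sum_congr rfl fun i _ => h4 i]
      exact Fin.sum_univ_eq_sum_range f n
    have e3 : ∑ j ∈ Finset.range (n+1), f j = ∑ j ∈ Finset.range n, f (j+1) + f 0 :=
      Finset.sum_range_succ' f n
    have e4 : ∑ j ∈ Finset.range (n+1), f j = ∑ j ∈ Finset.range n, f j + f n := by
      rw [Finset.sum_range_succ]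
    have e5 : f n = 0 := by simp only [hf]; rw [dif_neg (lt_irrefl n)]
    omega
  have hA : (Finset.univ.filter (fun i => a i k)).card = ∑ i : Fin n, if a i k then 1 else 0 :=
    Finset.card_filter _ _
  have hB : (Finset.univ.filter (fun i => b i k)).card = ∑ i : Fin n, if b i k then 1 else 0 :=
    Finset.card_filter _ _
  have h5 : ∑ i : Fin n, ((if a i k ∧ ¬ bs i then (1:ℕ) else 0) + (if bs i then 1 else 0))
      = ∑ i : Fin n, if a i k then (1:ℕ) else 0 :=
    Finset.sum_congr rfl fun i _ => h2 i
  rw [Finset.sum_add_distrib] at h5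
  have hf0 : f 0 = if b ⟨0, hn⟩ k then 1 else 0 := by simp only [hf]; rw [dif_pos hn]
  have hle : (if b ⟨0, hn⟩ k then (1:ℕ) else 0) ≤ ∑ i : Fin n, if b i k then (1:ℕ) else 0 :=
    Finset.single_le_sum (f := fun i : Fin n => if b i k then (1:ℕ) else 0)
      (fun i _ => Nat.zero_le _) (Finset.mem_univ (⟨0, hn⟩ : Fin n))
  rw [hA, hB] at hcount'
  rw [hf0] at hsumbs
  constructor
  · intro hb0
    rw [h1]
    simp only [hb0, if_true] at hsumbs hle
    omega
  · intro hb0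
    rw [h1]
    simp only [hb0, if_false] at hsumbs hle
    omega
open Classical in
private theorem core {G : Type*} [Group G] {n : ℕ} (hn : 0 < n) {K : Type*} [Finite K]
    (cfg : G → K) (a b : Fin n → K → Prop) (u : Fin n → G)
    (hu : ∀ (i : Fin n) (x : G), b i (cfg (u i * x)) ↔ a i (cfg x))
    (hmono : ∀ (i : ℕ) (h : i + 1 < n) (k : K), b ⟨i+1, h⟩ k → a ⟨i, Nat.lt_of_succ_lt h⟩ k)
    (hUK : ∀ k : K, (b ⟨0, hn⟩ k → (UKset a b k).card = 2) ∧
      (¬ b ⟨0, hn⟩ k → (UKset a b k).card = 1)) :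
    IsCompleteParadox G (1 + Nat.card {k : K // b ⟨0, hn⟩ k}) (Nat.card K) := by
  classical
  set v : ℕ → G := vprod u with hv
  -- basic conversions
  have hab : ∀ (j : ℕ) (h : j + 1 < n) (z : G),
      b ⟨j+1, h⟩ (cfg ((v j)⁻¹ * z)) ↔ a ⟨j+1, h⟩ (cfg ((v (j+1))⁻¹ * z)) := by
    intro j h z
    have h2 : v (j+1) = v j * u ⟨j+1, h⟩ := by
      simp only [hv, vprod, uext, dif_pos h]
    have h1 : u ⟨j+1, h⟩ * ((v (j+1))⁻¹ * z) = (v j)⁻¹ * z := by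
      rw [h2]; group
    rw [← h1]
    exact hu _ _
  have ha0 : ∀ z : G, b ⟨0, hn⟩ (cfg z) ↔ a ⟨0, hn⟩ (cfg ((v 0)⁻¹ * z)) := by
    intro z
    have h2 : v 0 = u ⟨0, hn⟩ := by simp only [hv, vprod, uext, dif_pos hn]
    have h1 : u ⟨0, hn⟩ * ((v 0)⁻¹ * z) = z := by rw [h2]; group
    conv_lhs => rw [← h1]
    exact hu _ _
  -- the chain predicate
  have hstep : ∀ (j : ℕ) (z : G), cpred cfg a u (j+1) z → cpred cfg a u j z := by
    intro j z hc
    obtain ⟨h, ha⟩ := hc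
    have hb : b ⟨j+1, h⟩ (cfg ((v j)⁻¹ * z)) := (hab j h z).mpr ha
    exact ⟨Nat.lt_of_succ_lt h, hmono j h _ hb⟩
  have hdesc : ∀ (j t : ℕ) (z : G), cpred cfg a u (j + t) z → cpred cfg a u j z := by
    intro j t z
    induction t with
    | zero => exact id
    | succ t ih => exact fun hc => ih (hstep _ _ hc)
  have hc0 : ∀ z : G, cpred cfg a u 0 z ↔ b ⟨0, hn⟩ (cfg z) := by
    intro z
    constructor
    · rintro ⟨h, ha⟩
      exact (ha0 z).mpr ha
    · intro hb; exact ⟨hn, (ha0 z).mp hb⟩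
  -- token characterization
  have htok : ∀ (z : G) (i : Fin n),
      i ∈ UKset a b (cfg ((v i.val)⁻¹ * z)) ↔
        (cpred cfg a u i.val z ∧ ¬ cpred cfg a u (i.val+1) z) := by
    intro z i
    rw [UKset, Finset.mem_filter]
    simp only [Finset.mem_univ, true_and]
    constructor
    · rintro ⟨ha, hnb⟩
      refine ⟨⟨i.isLt, ha⟩, ?_⟩
      rintro ⟨h, ha'⟩
      exact hnb h ((hab i.val h z).mpr ha')
    · rintro ⟨⟨h, ha⟩, hnc⟩
      exact ⟨ha, fun h' hb => hnc ⟨h', (hab i.val h' z).mp hb⟩⟩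
  -- uniqueness
  have hkey : ∀ (z : G) (i i' : Fin n),
      i ∈ UKset a b (cfg ((v i.val)⁻¹ * z)) → i' ∈ UKset a b (cfg ((v i'.val)⁻¹ * z)) →
      i = i' := by
    intro z i i' hi hi'
    rw [htok] at hi hi'
    by_contra hne
    rcases Nat.lt_or_ge i.val i'.val with h | h
    · exact hi.2 (hdesc (i.val+1) (i'.val - (i.val+1)) z
        (by rw [Nat.add_sub_cancel' h]; exact hi'.1))
    · have h' : i'.val < i.val := by
        rcases Nat.lt_or_ge i'.val i.val with h2 | h2
        · exact h2
        · exact absurd (Fin.ext (le_antisymm h2 h)) hne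
      exact hi'.2 (hdesc (i'.val+1) (i.val - (i'.val+1)) z
        (by rw [Nat.add_sub_cancel' h']; exact hi.1))
  -- existence
  have hexist : ∀ z : G, b ⟨0, hn⟩ (cfg z) →
      ∃ i : Fin n, i ∈ UKset a b (cfg ((v i.val)⁻¹ * z)) := by
    intro z hz
    have hP : ∃ j, ¬ cpred cfg a u j z := ⟨n, by rintro ⟨h, _⟩; exact absurd h (lt_irrefl n)⟩
    have hj0 : ¬ cpred cfg a u (Nat.find hP) z := Nat.find_spec hP
    have hj0pos : 0 < Nat.find hP := by
      rcases Nat.eq_zero_or_pos (Nat.find hP) with h | h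
      · exact absurd ((hc0 z).mpr hz) (h ▸ hj0)
      · exact h
    have hcm : cpred cfg a u (Nat.find hP - 1) z :=
      not_not.mp (Nat.find_min hP (Nat.sub_lt hj0pos one_pos))
    obtain ⟨hlt, ha⟩ := hcm
    refine ⟨⟨Nat.find hP - 1, hlt⟩, ?_⟩
    rw [htok]
    refine ⟨⟨hlt, ha⟩, ?_⟩
    have he : Nat.find hP - 1 + 1 = Nat.find hP := Nat.succ_pred_eq_of_pos hj0pos
    show ¬ cpred cfg a u ((Nat.find hP - 1) + 1) z
    rw [he]
    exact hj0
  -- landing in Z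
  have hland : ∀ (x : G) (i : Fin n), i ∈ UKset a b (cfg x) →
      b ⟨0, hn⟩ (cfg (v i.val * x)) := by
    intro x i hi
    have hx : (v i.val)⁻¹ * (v i.val * x) = x := by group
    have hi' : i ∈ UKset a b (cfg ((v i.val)⁻¹ * (v i.val * x))) := by rwa [hx]
    rw [htok] at hi'
    have h1 : cpred cfg a u (0 + i.val) (v i.val * x) := by
      rw [Nat.zero_add]; exact hi'.1
    exact (hc0 _).mp (hdesc 0 i.val _ h1)
  -- the data
  haveI : Fintype K := Fintype.ofFinite K
  set Z : Set G := {z | b ⟨0, hn⟩ (cfg z)} with hZ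
  set D : K → Set G := fun k => cfg ⁻¹' {k} with hD
  have hUKne : ∀ k, (UKset a b k).Nonempty := by
    intro k
    rw [← Finset.card_pos]
    by_cases hb : b ⟨0, hn⟩ k
    · rw [(hUK k).1 hb]; norm_num
    · rw [(hUK k).2 hb]; norm_num
  set dmin : K → Fin n := fun k => (UKset a b k).min' (hUKne k) with hdmin
  set dmax : K → Fin n := fun k => (UKset a b k).max' (hUKne k) with hdmax
  have hdminmem : ∀ k, dmin k ∈ UKset a b k := fun k => Finset.min'_mem _ _
  have hdmaxmem : ∀ k, dmax k ∈ UKset a b k := fun k => Finset.max'_mem _ _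
  have hlt : ∀ k, b ⟨0, hn⟩ k → dmin k < dmax k := by
    intro k hk
    exact Finset.min'_lt_max'_of_card _ (by rw [(hUK k).1 hk]; norm_num)
  have hstruct : ∀ (k : K) (i : Fin n), i ∈ UKset a b k →
      i = dmin k ∨ (b ⟨0, hn⟩ k ∧ i = dmax k) := by
    intro k i hi
    by_cases hk : b ⟨0, hn⟩ k
    · have hpair : ({dmin k, dmax k} : Finset (Fin n)) = UKset a b k := by
        apply Finset.eq_of_subset_of_card_le
        · intro x hx
          rcases Finset.mem_insert.mp hx with h | h
          · exact h ▸ hdminmem k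
          · exact (Finset.mem_singleton.mp h) ▸ hdmaxmem k
        · rw [(hUK k).1 hk, Finset.card_insert_of_notMem (by
            simp only [Finset.mem_singleton]; exact (hlt k hk).ne), Finset.card_singleton]
      rw [← hpair] at hi
      rcases Finset.mem_insert.mp hi with h | h
      · exact Or.inl h
      · exact Or.inr ⟨hk, Finset.mem_singleton.mp h⟩
    · left
      have hcard : (UKset a b k).card ≤ 1 := le_of_eq ((hUK k).2 hk)
      exact Finset.card_le_one.mp hcard i hi (dmin k) (hdminmem k)
  -- membership in translated pieces
  have hsmem : ∀ (z : G) (j : ℕ) (k : K), z ∈ (v j) • D k ↔ cfg ((v j)⁻¹ * z) = k := by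
    intro z j k
    rw [Set.mem_smul_set_iff_inv_smul_mem, hD]
    simp [smul_eq_mul]
  have hpieceZ : ∀ (k : K) (i : Fin n), i ∈ UKset a b k → (v i.val • D k) ⊆ Z := by
    intro k i hi z hz
    rw [hsmem] at hz
    have h1 := hland ((v i.val)⁻¹ * z) i (by rw [hz]; exact hi)
    have hvz : v i.val * ((v i.val)⁻¹ * z) = z := by group
    rw [hvz] at h1
    exact h1
  have hdisj2 : ∀ (z : G) (k k' : K) (i i' : Fin n), i ∈ UKset a b k → i' ∈ UKset a b k' →
      z ∈ v i.val • D k → z ∈ v i'.val • D k' → i = i' ∧ k = k' := by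
    intro z k k' i i' hi hi' hz hz'
    rw [hsmem] at hz hz'
    have h1 : i ∈ UKset a b (cfg ((v i.val)⁻¹ * z)) := by rw [hz]; exact hi
    have h2 : i' ∈ UKset a b (cfg ((v i'.val)⁻¹ * z)) := by rw [hz']; exact hi'
    have h3 : i = i' := hkey z i i' h1 h2
    subst h3
    exact ⟨rfl, by rw [← hz, ← hz']⟩
  have hcover : ∀ z : G, z ∈ Z →
      (∃ k : K, z ∈ v (dmin k).val • D k) ∨
      (∃ k : K, b ⟨0, hn⟩ k ∧ z ∈ v (dmax k).val • D k) := by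
    intro z hz
    obtain ⟨i, hi⟩ := hexist z hz
    have hzmem : z ∈ v i.val • D (cfg ((v i.val)⁻¹ * z)) := (hsmem _ _ _).mpr rfl
    rcases hstruct _ i hi with h | ⟨hb, h⟩
    · left
      refine ⟨cfg ((v i.val)⁻¹ * z), ?_⟩
      rw [← h]
      exact hzmem
    · right
      refine ⟨cfg ((v i.val)⁻¹ * z), hb, ?_⟩
      rw [← h]
      exact hzmem
  -- index types
  set ZK := {k : K // b ⟨0, hn⟩ k} with hZK
  have eZ : Fin (1 + Nat.card ZK) ≃ Option ZK :=
    (Fintype.equivFinOfCardEq (by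
      simp [Nat.card_eq_fintype_card, Nat.add_comm])).symm
  have eK : Fin (Nat.card K) ≃ K :=
    (Fintype.equivFinOfCardEq (by simp [Nat.card_eq_fintype_card])).symm
  set Apcs : Option ZK → Set G :=
    fun o => o.elim Zᶜ (fun k => (v (dmax k.1).val) • D k.1) with hA
  set spcs : Option ZK → G := fun o => o.elim 1 (fun k => (v (dmax k.1).val)⁻¹) with hs
  set Bpcs : K → Set G := fun k => (v (dmin k).val) • D k with hB
  set tpcs : K → G := fun k => (v (dmin k).val)⁻¹ with ht
  -- disjointness facts
  have hAd : ∀ o o' : Option ZK, o ≠ o' → Disjoint (Apcs o) (Apcs o') := by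
    intro o o' hne
    rw [Set.disjoint_left]
    intro z hz hz'
    obtain _ | k := o <;> obtain _ | k' := o'
    · exact hne rfl
    · simp only [hA, Option.elim] at hz hz'
      exact hz (hpieceZ _ _ (hdmaxmem k'.1) hz')
    · simp only [hA, Option.elim] at hz hz'
      exact hz' (hpieceZ _ _ (hdmaxmem k.1) hz)
    · simp only [hA, Option.elim] at hz hz'
      have h3 := hdisj2 z k.1 k'.1 _ _ (hdmaxmem k.1) (hdmaxmem k'.1) hz hz'
      exact hne (congrArg some (Subtype.ext h3.2))
  have hBd : ∀ k k' : K, k ≠ k' → Disjoint (Bpcs k) (Bpcs k') := by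
    intro k k' hne
    rw [Set.disjoint_left]; intro z hz hz'
    simp only [hB] at hz hz'
    exact hne (hdisj2 z k k' _ _ (hdminmem k) (hdminmem k') hz hz').2
  have hABd : ∀ (o : Option ZK) (k' : K), Disjoint (Apcs o) (Bpcs k') := by
    intro o k'
    rw [Set.disjoint_left]; intro z hz hz'
    obtain _ | k := o
    · simp only [hA, Option.elim] at hz
      simp only [hB] at hz'
      exact hz (hpieceZ _ _ (hdminmem k') hz')
    · simp only [hA, Option.elim] at hz
      simp only [hB] at hz'
      obtain ⟨hii, hkk⟩ := hdisj2 z k.1 k' _ _ (hdmaxmem k.1) (hdminmem k') hz hz'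
      have h4 := hlt k.1 k.2
      rw [← hkk] at hii
      rw [hii] at h4
      exact lt_irrefl _ h4
  have hUnion : ((⋃ o, Apcs o) ∪ ⋃ k, Bpcs k) = Set.univ := by
    rw [Set.eq_univ_iff_forall]
    intro z
    simp only [Set.mem_union, Set.mem_iUnion]
    by_cases hz : z ∈ Z
    · rcases hcover z hz with ⟨k, hk⟩ | ⟨k, hb, hk⟩
      · right; exact ⟨k, by simp only [hB]; exact hk⟩
      · left; exact ⟨some ⟨k, hb⟩, by simp only [hA, Option.elim]; exact hk⟩
    · left; exact ⟨none, hz⟩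
  have hsA : ∀ o : Option ZK, spcs o • Apcs o = o.elim Zᶜ (fun k => D k.1) := by
    intro o
    obtain _ | k := o
    · simp only [hA, hs, Option.elim, one_smul]
    · simp only [hA, hs, Option.elim, inv_smul_smul]
  have hDmem : ∀ (z : G) (k : K), z ∈ D k ↔ cfg z = k := by
    intro z k
    simp only [hD, Set.mem_preimage, Set.mem_singleton_iff]
  have hsAU : (⋃ o, spcs o • Apcs o) = Set.univ := by
    rw [Set.eq_univ_iff_forall]; intro z
    rw [Set.mem_iUnion]
    by_cases hz : z ∈ Z
    · refine ⟨some ⟨cfg z, hz⟩, ?_⟩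
      rw [hsA]
      simp only [Option.elim]
      exact (hDmem z _).mpr rfl
    · exact ⟨none, by rw [hsA]; exact hz⟩
  have hsAd : ∀ o o' : Option ZK, o ≠ o' → Disjoint (spcs o • Apcs o) (spcs o' • Apcs o') := by
    intro o o' hne
    rw [hsA, hsA, Set.disjoint_left]
    intro z hz hz'
    obtain _ | k := o <;> obtain _ | k' := o'
    · exact hne rfl
    · simp only [Option.elim] at hz hz'
      rw [hDmem] at hz'
      exact hz (show z ∈ Z from by rw [hZ, Set.mem_setOf_eq, hz']; exact k'.2)
    · simp only [Option.elim] at hz hz'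
      rw [hDmem] at hz
      exact hz' (show z ∈ Z from by rw [hZ, Set.mem_setOf_eq, hz]; exact k.2)
    · simp only [Option.elim] at hz hz'
      rw [hDmem] at hz hz'
      exact hne (congrArg some (Subtype.ext (hz.symm.trans hz')))
  have htB : ∀ k : K, tpcs k • Bpcs k = D k := by
    intro k
    simp only [hB, ht, inv_smul_smul]
  have htBU : (⋃ k, tpcs k • Bpcs k) = Set.univ := by
    rw [Set.eq_univ_iff_forall]; intro z
    rw [Set.mem_iUnion]
    exact ⟨cfg z, by rw [htB]; exact (hDmem z _).mpr rfl⟩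
  have htBd : ∀ k k' : K, k ≠ k' → Disjoint (tpcs k • Bpcs k) (tpcs k' • Bpcs k') := by
    intro k k' hne
    rw [htB, htB, Set.disjoint_left]
    intro z hz hz'
    rw [hDmem] at hz hz'
    exact hne (hz.symm.trans hz')
  -- assemble
  refine ⟨fun i => Apcs (eZ i), fun j => Bpcs (eK j), fun i => spcs (eZ i), fun j => tpcs (eK j),
    fun i i' h => hAd _ _ (fun e => h (eZ.injective e)),
    fun j j' h => hBd _ _ (fun e => h (eK.injective e)),
    fun i j => hABd _ _, ?_, ?_,
    fun i i' h => hsAd _ _ (fun e => h (eZ.injective e)), ?_,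
    fun j j' h => htBd _ _ (fun e => h (eK.injective e))⟩
  · rw [eZ.surjective.iUnion_comp (fun o => Apcs o),
      eK.surjective.iUnion_comp (fun k => Bpcs k)]
    exact hUnion
  · rw [eZ.surjective.iUnion_comp (fun o => spcs o • Apcs o)]
    exact hsAU
  · rw [eK.surjective.iUnion_comp (fun k => tpcs k • Bpcs k)]
    exact htBU

theorem tarski_bound_special {G : Type*} [Group G] {n m : ℕ} (hn : 0 < n)
    (g : Fin n → G) (E : Fin m → Set G) (hE : IsPartition E)
    (iT : Fin n → Fin m) (jT kT : Fin n → Fin (n + 1))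
    (V W : Matrix (Fin n) {C : Fin (n + 1) → Fin m // IsConfig g E C} ℝ)
    (hV : ∀ t C, V t C = ind (xj g E C.1 (kT t) ⊆ E (iT t)))
    (hW : ∀ t C, W t C = ind (xj g E C.1 (jT t) ⊆ E (iT t)))
    (hsum : ∀ C, ∑ i, (W i C - V i C) = 1)
    (σ : Equiv.Perm (Fin n))
    (hrows : ∀ i : Fin n, i.val + 1 < n → ∀ C,
      0 ≤ (permMat σ * W - shiftRows (permMat σ) * V) i C) :
    tarskiNumber G ≤
      ((1 + Nat.card {C : {C : Fin (n + 1) → Fin m // IsConfig g E C} // V (σ ⟨0, hn⟩) C = 1}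
          + Nat.card {C : Fin (n + 1) → Fin m // IsConfig g E C} : ℕ) : ℕ∞) := by
  classical
  have hcov : ∀ y : G, ∃ i, y ∈ E i := by
    intro y
    have h1 : y ∈ ⋃ i, E i := by rw [hE.2]; exact Set.mem_univ y
    exact Set.mem_iUnion.mp h1
  have huniqE : ∀ (y : G) (i i' : Fin m), y ∈ E i → y ∈ E i' → i = i' := by
    intro y i i' h1 h2
    by_contra hne
    exact Set.disjoint_left.mp (hE.1 i i' hne) h1 h2
  have hcfaspec : ∀ (x : G) (j : Fin (n+1)), ghat g j * x ∈ E ((hcov (ghat g j * x)).choose) :=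
    fun x j => (hcov (ghat g j * x)).choose_spec
  have hconf : ∀ x : G, IsConfig g E (fun j => (hcov (ghat g j * x)).choose) := by
    intro x
    refine ⟨x, ?_, ?_⟩
    · have h1 := hcfaspec x 0
      have e : ghat g (0 : Fin (n+1)) * x = x := by simp [ghat]
      exact Set.mem_of_eq_of_mem e.symm h1
    · intro i
      have h1 := hcfaspec x i.succ
      have e : ghat g i.succ * x = g i * x := by simp [ghat]
      exact Set.mem_of_eq_of_mem e.symm h1
  set cfg : G → {C : Fin (n + 1) → Fin m // IsConfig g E C} :=
    fun x => ⟨fun j => (hcov (ghat g j * x)).choose, hconf x⟩ with hcfg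
  have hcfa_iff : ∀ (x : G) (j : Fin (n+1)) (i : Fin m),
      (cfg x).1 j = i ↔ ghat g j * x ∈ E i := by
    intro x j i
    constructor
    · rintro rfl; exact hcfaspec x j
    · intro h; exact huniqE _ _ _ (hcfaspec x j) h
  -- subset iff value
  have hxj : ∀ (C : {C : Fin (n + 1) → Fin m // IsConfig g E C}) (j : Fin (n+1)) (i : Fin m),
      (xj g E C.1 j ⊆ E i) ↔ C.1 j = i := by
    intro C j i
    obtain ⟨x, hx0, hxs⟩ := C.2
    have hxmem : x ∈ xzero g E C.1 := by
      refine ⟨hx0, ?_⟩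
      rw [Set.mem_iInter]
      intro t
      rw [Set.mem_smul_set_iff_inv_smul_mem]
      simpa [smul_eq_mul] using hxs t
    have hsub0 : ∀ y, y ∈ xzero g E C.1 → ghat g j * y ∈ E (C.1 j) := by
      intro y hy
      obtain ⟨hy0, hyi⟩ := hy
      rw [Set.mem_iInter] at hyi
      induction j using Fin.cases with
      | zero => simpa [ghat] using hy0
      | succ t =>
          have h1 := hyi t
          rw [Set.mem_smul_set_iff_inv_smul_mem] at h1
          simpa [ghat, smul_eq_mul] using h1
    have hsub : xj g E C.1 j ⊆ E (C.1 j) := by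
      intro z hz
      simp only [xj, Set.mem_smul_set] at hz
      obtain ⟨y, hy, rfl⟩ := hz
      simpa [smul_eq_mul] using hsub0 y hy
    have hne2 : (xj g E C.1 j).Nonempty :=
      ⟨ghat g j • x, Set.smul_mem_smul_set hxmem⟩
    constructor
    · intro hss
      by_contra hne'
      obtain ⟨z, hz⟩ := hne2
      exact Set.disjoint_left.mp (hE.1 _ _ hne') (hsub hz) (hss hz)
    · intro h
      rw [← h]
      exact hsub
  -- indicator facts
  have hind01 : ∀ P : Prop, ind P = 0 ∨ ind P = 1 := by
    intro P
    by_cases h : P <;> simp [ind, h]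
  have hind1 : ∀ P : Prop, (ind P = 1 ↔ P) := by
    intro P
    by_cases h : P <;> simp [ind, h]
  have hW01 : ∀ t C, W t C = 0 ∨ W t C = 1 := fun t C => by rw [hW]; exact hind01 _
  have hV01 : ∀ t C, V t C = 0 ∨ V t C = 1 := fun t C => by rw [hV]; exact hind01 _
  have haiff : ∀ (t : Fin n) C, (W t C = 1) ↔ C.1 (jT t) = iT t := by
    intro t C
    rw [hW, hind1]
    exact hxj C _ _
  have hbiff : ∀ (t : Fin n) C, (V t C = 1) ↔ C.1 (kT t) = iT t := by
    intro t C
    rw [hV, hind1]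
    exact hxj C _ _
  -- matrix entries
  have matA : ∀ (i : Fin n) C, (permMat σ * W) i C = W (σ i) C := by
    intro i C
    rw [Matrix.mul_apply, Finset.sum_eq_single (σ i)]
    · simp [permMat]
    · intro c _ hc
      have hnec : σ i ≠ c := fun e => hc e.symm
      simp [permMat, hnec]
    · intro h; exact absurd (Finset.mem_univ _) h
  have matB : ∀ (i : Fin n) C, (shiftRows (permMat σ) * V) i C = V (σ (cycSucc i)) C := by
    intro i C
    rw [Matrix.mul_apply, Finset.sum_eq_single (σ (cycSucc i))]
    · simp [shiftRows, permMat]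
    · intro c _ hc
      have hnec : σ (cycSucc i) ≠ c := fun e => hc e.symm
      simp [shiftRows, permMat, hnec]
    · intro h; exact absurd (Finset.mem_univ _) h
  -- monotonicity
  have hmono : ∀ (i : ℕ) (h : i+1 < n) C,
      (V (σ ⟨i+1, h⟩) C = 1) → (W (σ ⟨i, Nat.lt_of_succ_lt h⟩) C = 1) := by
    intro i h C hb
    have hr := hrows ⟨i, Nat.lt_of_succ_lt h⟩ h C
    rw [Matrix.sub_apply, matA, matB] at hr
    have hcyc : cycSucc (⟨i, Nat.lt_of_succ_lt h⟩ : Fin n) = ⟨i+1, h⟩ := by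
      simp only [cycSucc]
      exact Fin.ext (Nat.mod_eq_of_lt h)
    rw [hcyc, hb] at hr
    rcases hW01 (σ ⟨i, Nat.lt_of_succ_lt h⟩) C with h0 | h1
    · rw [h0] at hr; linarith
    · exact h1
  -- counting
  have hcount : ∀ C, Nat.card {i : Fin n // W (σ i) C = 1}
      = Nat.card {i : Fin n // V (σ i) C = 1} + 1 := by
    intro C
    have e1 : ∀ (M : Matrix (Fin n) {C : Fin (n + 1) → Fin m // IsConfig g E C} ℝ),
        (∀ t C, M t C = 0 ∨ M t C = 1) →
        (∑ i, M i C) = (Nat.card {i : Fin n // M (σ i) C = 1} : ℝ) := by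
      intro M hM
      rw [Nat.card_eq_fintype_card, Fintype.card_subtype, Finset.card_filter]
      push_cast
      rw [← Equiv.sum_comp σ (fun i => M i C)]
      refine Finset.sum_congr rfl fun i _ => ?_
      rcases hM (σ i) C with h | h <;> simp [h]
    have h3 := hsum C
    rw [Finset.sum_sub_distrib, e1 W hW01, e1 V hV01] at h3
    have h4 : ((Nat.card {i : Fin n // W (σ i) C = 1} : ℕ) : ℝ)
        = ((Nat.card {i : Fin n // V (σ i) C = 1} + 1 : ℕ) : ℝ) := by
      push_cast
      linarith
    exact Nat.cast_injective h4
  -- translations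
  set u : Fin n → G := fun i => (ghat g (kT (σ i)))⁻¹ * ghat g (jT (σ i)) with hudef
  have hu : ∀ (i : Fin n) (x : G),
      (V (σ i) (cfg (u i * x)) = 1) ↔ (W (σ i) (cfg x) = 1) := by
    intro i x
    rw [hbiff, haiff]
    have hmul : ghat g (kT (σ i)) * (u i * x) = ghat g (jT (σ i)) * x := by
      simp only [hudef]
      group
    rw [hcfa_iff, hcfa_iff, hmul]
  -- apply the core construction
  have hUK := fun C => card_UKset hn
    (fun (i : Fin n) C => W (σ i) C = 1) (fun (i : Fin n) C => V (σ i) C = 1)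
    hmono C (hcount C)
  have hpar := core hn cfg
    (fun (i : Fin n) C => W (σ i) C = 1) (fun (i : Fin n) C => V (σ i) C = 1)
    u hu hmono hUK
  rw [tarskiNumber]
  exact sInf_le ⟨1 + Nat.card {C // V (σ ⟨0, hn⟩) C = 1},
    Nat.card {C : Fin (n + 1) → Fin m // IsConfig g E C}, rfl, hpar⟩


end PaperStmt
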